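/- Let n be a positive integer, 1 ≤ i < j ≤ n, let o ∈ S_n be the n-cycle with o(i) = i+1 for 1 ≤ i ≤ n−1 and o(n) = 1, and let w ∈ S_n with w(j) = n. If ℓ(w·s_{ij}) = ℓ(w) + 1 or ℓ(w·s_{ij}) = ℓ(w) − 2(j−i) + 1, then in fact ℓ(w·s_{ij}) = ℓ(w) + 1 and ℓ((o∘w)·s_{ij}) = ℓ(o∘w) − 2(j−i) + 1. -/
import Mathlib


/-- The length (number of inversions) of a permutation of `{1,…,n}`
(modeled as `Fin n`): the number of pairs `a < b` with `w a > w b`. -/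
def invLen {n : ℕ} (w : Equiv.Perm (Fin n)) : ℕ :=
  (Finset.univ.filter fun p : Fin n × Fin n => p.1 < p.2 ∧ w p.2 < w p.1).card

open Finset Equiv in


lemma card_filter_comp_perm {n : ℕ} (s : Equiv.Perm (Fin n)) (P : Fin n × Fin n → Prop)
    [DecidablePred P] :
    (Finset.univ.filter P).card
      = (Finset.univ.filter fun p : Fin n × Fin n => P (s p.1, s p.2)).card := by
  apply Finset.card_bij' (fun p _ => ((s.symm p.1, s.symm p.2) : Fin n × Fin n))
    (fun p _ => (s p.1, s p.2)) <;> simp [Finset.mem_filter]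

lemma card_filter_swap_pairs {n : ℕ} (P : Fin n × Fin n → Prop) [DecidablePred P] :
    (Finset.univ.filter P).card
      = (Finset.univ.filter fun p : Fin n × Fin n => P p.swap).card := by
  apply Finset.card_bij' (fun p _ => p.swap) (fun p _ => p.swap) <;> simp


lemma F_char {n : ℕ} (i j : Fin n) (hij : i < j) (a b : Fin n) :
    (a < b ∧ Equiv.swap i j b < Equiv.swap i j a) ↔
      (a = i ∧ i < b ∧ b < j) ∨ (i < a ∧ a < j ∧ b = j) ∨ (a = i ∧ b = j) := by
  simp only [Equiv.swap_apply_def, Fin.lt_def, Fin.ext_iff]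
  split_ifs <;> omega

lemma card_F {n : ℕ} (i j : Fin n) (hij : i < j) (X : Fin n × Fin n → Prop)
    [DecidablePred X] :
    (Finset.univ.filter fun p : Fin n × Fin n =>
        p.1 < p.2 ∧ Equiv.swap i j p.2 < Equiv.swap i j p.1 ∧ X p).card
      = ((Finset.Ioo i j).filter fun k => X (i, k)).card
        + ((Finset.Ioo i j).filter fun k => X (k, j)).card
        + (if X (i, j) then 1 else 0) := by
  classical
  have hset : (Finset.univ.filter fun p : Fin n × Fin n =>
        p.1 < p.2 ∧ Equiv.swap i j p.2 < Equiv.swap i j p.1 ∧ X p)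
      = (((Finset.Ioo i j).filter fun k => X (i, k)).image fun k => (i, k))
        ∪ (((Finset.Ioo i j).filter fun k => X (k, j)).image fun k => (k, j))
        ∪ (if X (i, j) then {(i, j)} else ∅) := by
    ext p
    obtain ⟨a, b⟩ := p
    simp only [Finset.mem_filter, Finset.mem_univ, true_and, Finset.mem_union,
      Finset.mem_image, Finset.mem_Ioo, Prod.mk.injEq]
    constructor
    · rintro ⟨h1, h2, hX⟩
      rcases (F_char i j hij a b).1 ⟨h1, h2⟩ with ⟨rfl, hb1, hb2⟩ | ⟨ha1, ha2, rfl⟩ | ⟨rfl, rfl⟩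
      · exact Or.inl (Or.inl ⟨b, ⟨⟨hb1, hb2⟩, hX⟩, rfl, rfl⟩)
      · exact Or.inl (Or.inr ⟨a, ⟨⟨ha1, ha2⟩, hX⟩, rfl, rfl⟩)
      · simp [hX]
    · intro hmem
      rcases hmem with (⟨k, ⟨⟨hk1, hk2⟩, hX⟩, rfl, rfl⟩ | ⟨k, ⟨⟨hk1, hk2⟩, hX⟩, rfl, rfl⟩) | hmem
      · obtain ⟨c1, c2⟩ := (F_char i j hij i k).2 (Or.inl ⟨rfl, hk1, hk2⟩)
        exact ⟨c1, c2, hX⟩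
      · obtain ⟨c1, c2⟩ := (F_char i j hij k j).2 (Or.inr (Or.inl ⟨hk1, hk2, rfl⟩))
        exact ⟨c1, c2, hX⟩
      · split_ifs at hmem with hXij
        · simp only [Finset.mem_singleton, Prod.mk.injEq] at hmem
          obtain ⟨c1, c2⟩ := (F_char i j hij a b).2 (Or.inr (Or.inr ⟨hmem.1, hmem.2⟩))
          exact ⟨c1, c2, by rw [hmem.1, hmem.2]; exact hXij⟩
        · simp at hmem
  rw [hset]
  have hinj1 : Function.Injective (fun k : Fin n => ((i, k) : Fin n × Fin n)) := by
    intro x y hxy; simpa using hxy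
  have hinj2 : Function.Injective (fun k : Fin n => ((k, j) : Fin n × Fin n)) := by
    intro x y hxy; simpa using hxy
  have hd1 : Disjoint (((Finset.Ioo i j).filter fun k => X (i, k)).image fun k => ((i, k) : Fin n × Fin n))
      (((Finset.Ioo i j).filter fun k => X (k, j)).image fun k => (k, j)) := by
    simp only [Finset.disjoint_left, Finset.mem_image]
    rintro p ⟨k, hk, rfl⟩ ⟨l, hl, hpl⟩
    simp only [Finset.mem_filter, Finset.mem_Ioo] at hk hl
    injection hpl with he1 he2
    subst he2
    exact absurd hk.1.2 (lt_irrefl _)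
  have hd2 : Disjoint ((((Finset.Ioo i j).filter fun k => X (i, k)).image fun k => ((i, k) : Fin n × Fin n))
      ∪ (((Finset.Ioo i j).filter fun k => X (k, j)).image fun k => (k, j)))
      (if X (i, j) then ({(i, j)} : Finset (Fin n × Fin n)) else ∅) := by
    simp only [Finset.disjoint_left, Finset.mem_union, Finset.mem_image]
    rintro p (⟨k, hk, rfl⟩ | ⟨k, hk, rfl⟩) hp <;> split_ifs at hp <;>
      simp only [Finset.mem_singleton, Prod.mk.injEq, Finset.notMem_empty] at hp
    · simp only [Finset.mem_filter, Finset.mem_Ioo] at hk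
      exact absurd (hp.2 ▸ hk.1.2) (lt_irrefl _)
    · simp only [Finset.mem_filter, Finset.mem_Ioo] at hk
      exact absurd (hp.1 ▸ hk.1.1) (lt_irrefl _)
  rw [Finset.card_union_of_disjoint hd2, Finset.card_union_of_disjoint hd1,
    Finset.card_image_of_injective _ hinj1, Finset.card_image_of_injective _ hinj2]
  split_ifs <;> simp

section
variable {n : ℕ} (w : Equiv.Perm (Fin n)) (i j : Fin n)

lemma invLen_mul_swap (hij : i < j) :
    (invLen (w * Equiv.swap i j) : ℤ)
      = (invLen w : ℤ) + (2 * ((Finset.Ioo i j).card : ℤ) + 1)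
        - 2 * (((Finset.Ioo i j).filter fun k => w k < w i).card : ℤ)
        - 2 * (((Finset.Ioo i j).filter fun k => w j < w k).card : ℤ)
        - 2 * (if w j < w i then 1 else 0) := by
  classical
  set s := Equiv.swap i j with hs
  -- step 1: reindex
  have e1 : invLen (w * s) = (Finset.univ.filter fun p : Fin n × Fin n =>
      s p.1 < s p.2 ∧ w p.2 < w p.1).card := by
    rw [invLen, card_filter_comp_perm s]
    congr 1
    ext p
    simp [Equiv.Perm.mul_apply, hs, Equiv.swap_apply_self]
  -- step 2: split the reindexed count
  have e2 : (Finset.univ.filter fun p : Fin n × Fin n =>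
        s p.1 < s p.2 ∧ w p.2 < w p.1).card
      = (Finset.univ.filter fun p : Fin n × Fin n =>
          p.1 < p.2 ∧ s p.1 < s p.2 ∧ w p.2 < w p.1).card
        + (Finset.univ.filter fun p : Fin n × Fin n =>
          p.1 < p.2 ∧ s p.2 < s p.1 ∧ w p.1 < w p.2).card := by
    rw [← Finset.card_filter_add_card_filter_not
      (s := Finset.univ.filter fun p : Fin n × Fin n => s p.1 < s p.2 ∧ w p.2 < w p.1)
      (p := fun p : Fin n × Fin n => p.1 < p.2)]
    congr 1
    · rw [Finset.filter_filter]
      congr 1; ext p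
      simp only [Finset.mem_filter, Finset.mem_univ, true_and]
      tauto
    · rw [Finset.filter_filter]
      rw [card_filter_swap_pairs (fun p : Fin n × Fin n =>
        (s p.1 < s p.2 ∧ w p.2 < w p.1) ∧ ¬p.1 < p.2)]
      congr 1
      ext p
      simp only [Finset.mem_filter, Finset.mem_univ, true_and, Prod.fst_swap, Prod.snd_swap]
      constructor
      · rintro ⟨⟨h1, h2⟩, h3⟩
        have hne : p.1 ≠ p.2 := fun he => absurd (he ▸ h1) (lt_irrefl _)
        exact ⟨lt_of_le_of_ne (le_of_not_gt h3) hne, h1, h2⟩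
      · rintro ⟨h1, h2, h3⟩
        exact ⟨⟨h2, h3⟩, not_lt_of_gt h1⟩
  -- step 2': split invLen w
  have e3 : invLen w
      = (Finset.univ.filter fun p : Fin n × Fin n =>
          p.1 < p.2 ∧ s p.1 < s p.2 ∧ w p.2 < w p.1).card
        + (Finset.univ.filter fun p : Fin n × Fin n =>
          p.1 < p.2 ∧ s p.2 < s p.1 ∧ w p.2 < w p.1).card := by
    rw [invLen, ← Finset.card_filter_add_card_filter_not
      (s := Finset.univ.filter fun p : Fin n × Fin n => p.1 < p.2 ∧ w p.2 < w p.1)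
      (p := fun p : Fin n × Fin n => s p.1 < s p.2)]
    congr 1
    · rw [Finset.filter_filter]
      congr 1; ext p
      simp only [Finset.mem_filter, Finset.mem_univ, true_and]
      tauto
    · rw [Finset.filter_filter]
      congr 1
      ext p
      simp only [Finset.mem_filter, Finset.mem_univ, true_and]
      constructor
      · rintro ⟨⟨h1, h2⟩, h3⟩
        have hne : s p.1 ≠ s p.2 := fun he =>
          absurd (s.injective he ▸ h1) (lt_irrefl _)
        exact ⟨h1, lt_of_le_of_ne (le_of_not_gt h3) (Ne.symm hne), h2⟩
      · rintro ⟨h1, h2, h3⟩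
        exact ⟨⟨h1, h3⟩, not_lt_of_gt h2⟩
  -- step 3: apply card_F
  have e4 := card_F i j hij (fun p : Fin n × Fin n => w p.2 < w p.1)
  have e5 := card_F i j hij (fun p : Fin n × Fin n => w p.1 < w p.2)
  simp only [← hs] at e4 e5
  -- complements
  have hne_ij : w i ≠ w j := w.injective.ne (ne_of_lt hij)
  have hA : ((Finset.Ioo i j).filter fun k => w k < w i).card
      + ((Finset.Ioo i j).filter fun k => w i < w k).card = (Finset.Ioo i j).card := by
    rw [← Finset.card_filter_add_card_filter_not (s := Finset.Ioo i j)
      (p := fun k => w k < w i)]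
    congr 1
    congr 1
    apply Finset.filter_congr
    intro k hk
    simp only [Finset.mem_Ioo] at hk
    have hne : w k ≠ w i := w.injective.ne (ne_of_gt hk.1)
    exact ⟨fun h => not_lt_of_gt h, fun h => lt_of_le_of_ne (not_lt.mp h) hne.symm⟩
  have hB : ((Finset.Ioo i j).filter fun k => w j < w k).card
      + ((Finset.Ioo i j).filter fun k => w k < w j).card = (Finset.Ioo i j).card := by
    rw [← Finset.card_filter_add_card_filter_not (s := Finset.Ioo i j)
      (p := fun k => w j < w k)]
    congr 1
    congr 1
    apply Finset.filter_congr
    intro k hk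
    simp only [Finset.mem_Ioo] at hk
    have hne : w k ≠ w j := w.injective.ne (ne_of_lt hk.2)
    exact ⟨fun h => not_lt_of_gt h, fun h => lt_of_le_of_ne (not_lt.mp h) hne⟩
  have hC : (if w j < w i then (1:ℕ) else 0) + (if w i < w j then (1:ℕ) else 0) = 1 := by
    rcases lt_or_gt_of_ne hne_ij with h | h <;> simp [h, asymm h]
  have hC' : (if w j < w i then (1:ℤ) else 0)
      = ((if w j < w i then (1:ℕ) else 0 : ℕ) : ℤ) := by
    split_ifs <;> simp
  rw [hC', e1, e2, e3, e4, e5]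
  push_cast
  omega

end

/-- Let `o` be the cyclic shift `o(i) = i + 1 (mod n)`, `1 ≤ i < j ≤ n`, and
`w ∈ S_n` with `w(j) = n` (the top value `n` is modeled by the top element
`n−1` of `Fin n`).  If `ℓ(w·s_{ij}) = ℓ(w) + 1` or
`ℓ(w·s_{ij}) = ℓ(w) − 2(j−i) + 1`, then in fact `ℓ(w·s_{ij}) = ℓ(w) + 1` and
`ℓ((o∘w)·s_{ij}) = ℓ(o∘w) − 2(j−i) + 1`. -/
theorem length_conditions_of_apply_right_eq_top
    (n : ℕ) (hn : 0 < n) (o : Equiv.Perm (Fin n))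
    (ho : ∀ a : Fin n, (o a : ℕ) = ((a : ℕ) + 1) % n)
    (i j : Fin n) (hij : i < j) (w : Equiv.Perm (Fin n))
    (hwj : (w j : ℕ) = n - 1)
    (h : (invLen (w * Equiv.swap i j) : ℤ) = (invLen w : ℤ) + 1 ∨
        (invLen (w * Equiv.swap i j) : ℤ)
          = (invLen w : ℤ) - 2 * ((j : ℤ) - (i : ℤ)) + 1) :
    (invLen (w * Equiv.swap i j) : ℤ) = (invLen w : ℤ) + 1 ∧
      (invLen ((o * w) * Equiv.swap i j) : ℤ)
        = (invLen (o * w) : ℤ) - 2 * ((j : ℤ) - (i : ℤ)) + 1 := by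
  classical
  have hij' : (i : ℕ) < (j : ℕ) := hij
  have hcard : ((Finset.Ioo i j).card : ℤ) = (j : ℤ) - (i : ℤ) - 1 := by
    rw [Fin.card_Ioo]
    omega
  -- w j is the top element
  have htop : ∀ k : Fin n, k ≠ j → w k < w j := by
    intro k hk
    have h1 : (w k : ℕ) < n := (w k).isLt
    have h2 : w k ≠ w j := fun he => hk (w.injective he)
    have h3 : (w k : ℕ) ≠ (w j : ℕ) := fun he => h2 (Fin.ext he)
    rw [Fin.lt_def]
    omega
  have hBw : ((Finset.Ioo i j).filter fun k => w j < w k) = ∅ := by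
    rw [Finset.filter_eq_empty_iff]
    intro k hk
    simp only [Finset.mem_Ioo] at hk
    exact not_lt_of_gt (htop k (ne_of_lt hk.2))
  have hCw : ¬ w j < w i := not_lt_of_gt (htop i (ne_of_lt hij))
  have ew := invLen_mul_swap w i j hij
  rw [hBw, if_neg hCw] at ew
  simp only [Finset.card_empty, Nat.cast_zero, mul_zero, sub_zero] at ew
  have hAle : ((Finset.Ioo i j).filter fun k => w k < w i).card ≤ (Finset.Ioo i j).card :=
    Finset.card_filter_le _ _
  -- from the hypothesis, the first case holds and the filter is everything
  have key : (invLen (w * Equiv.swap i j) : ℤ) = (invLen w : ℤ) + 1 ∧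
      ((Finset.Ioo i j).filter fun k => w k < w i).card = (Finset.Ioo i j).card := by
    rcases h with h | h <;> constructor <;> omega
  have hAll : ∀ k ∈ Finset.Ioo i j, w k < w i := by
    have he : ((Finset.Ioo i j).filter fun k => w k < w i) = Finset.Ioo i j :=
      Finset.eq_of_subset_of_card_le (Finset.filter_subset _ _) (le_of_eq key.2.symm)
    exact fun k hk => Finset.filter_eq_self.mp he k hk
  refine ⟨key.1, ?_⟩
  -- now the cyclically shifted permutation
  have hvj0 : ((o * w) j : ℕ) = 0 := by
    have : ((o * w) j : ℕ) = ((w j : ℕ) + 1) % n := by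
      rw [Equiv.Perm.mul_apply, ho]
    rw [this, hwj]
    have hn1 : n - 1 + 1 = n := by omega
    rw [hn1, Nat.mod_self]
  have hvk : ∀ k : Fin n, k ≠ j → ((o * w) k : ℕ) = (w k : ℕ) + 1 := by
    intro k hk
    have h1 : (w k : ℕ) < (w j : ℕ) := htop k hk
    have : ((o * w) k : ℕ) = ((w k : ℕ) + 1) % n := by
      rw [Equiv.Perm.mul_apply, ho]
    rw [this]
    apply Nat.mod_eq_of_lt
    omega
  have hvjlt : ∀ k : Fin n, k ≠ j → (o * w) j < (o * w) k := by
    intro k hk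
    rw [Fin.lt_def, hvj0, hvk k hk]
    omega
  have ev := invLen_mul_swap (o * w) i j hij
  have hA' : ((Finset.Ioo i j).filter fun k => (o * w) k < (o * w) i) = Finset.Ioo i j := by
    rw [Finset.filter_eq_self]
    intro k hk
    simp only [Finset.mem_Ioo] at hk
    rw [Fin.lt_def, hvk k (ne_of_lt hk.2), hvk i (ne_of_lt hij)]
    have := hAll k (Finset.mem_Ioo.mpr hk)
    rw [Fin.lt_def] at this
    omega
  have hB' : ((Finset.Ioo i j).filter fun k => (o * w) j < (o * w) k) = Finset.Ioo i j := by
    rw [Finset.filter_eq_self]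
    intro k hk
    simp only [Finset.mem_Ioo] at hk
    exact hvjlt k (ne_of_lt hk.2)
  have hC' : (o * w) j < (o * w) i := hvjlt i (ne_of_lt hij)
  rw [hA', hB', if_pos hC'] at ev
  omega
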